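/- With notation as in the homogenization setup: if 𝒢 is a Gröbner basis for I ⊆ K⟨X⟩ with respect to ≺_gr, then the set of normal words modulo the homogenization ideal ⟨Ĩ⟩ in K⟨X,T⟩, with respect to ≺_{T-gr}, is exactly {T^r u : u ∈ N(I), r ∈ ℕ}, where N(I) is the set of normal words modulo I in K⟨X⟩. -/

import Mathlib

open scoped Classical


/-- Words in the letters `X_1, …, X_n`: the free monoid on `Fin n`. -/
abbrev Word (n : ℕ) := FreeMonoid (Fin n)

/-- The free associative `K`-algebra `K⟨X_1,…,X_n⟩`, realised as the monoid algebra of the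
free monoid on `Fin n`. -/
abbrev FreeAlg (K : Type) [Field K] (n : ℕ) := MonoidAlgebra K (Word n)

/-- The word `v` divides the word `u` if `u = w * v * s` for some words `w, s`. -/
def WDvd {n : ℕ} (v u : Word n) : Prop := ∃ w s : Word n, u = w * v * s

/-- The monomial of `K⟨X⟩` corresponding to a word. -/
noncomputable def mono {K : Type} [Field K] {n : ℕ} (w : Word n) : FreeAlg K n :=
  MonoidAlgebra.single w 1

/-- The two-sided ideal of `K⟨X⟩` generated by a set of words (a monomial ideal). -/
noncomputable def monIdeal (K : Type) [Field K] {n : ℕ} (Ω : Set (Word n)) :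
    TwoSidedIdeal (FreeAlg K n) :=
  TwoSidedIdeal.span (mono '' Ω)

/-- A ring is semiprime if `a R a = 0` implies `a = 0`. -/
def IsSemiprimeRing (R : Type*) [Ring R] : Prop :=
  ∀ a : R, (∀ r : R, a * r * a = 0) → a = 0

/-- A ring is semiprimitive (Jacobson semisimple) if its Jacobson radical is zero. -/
def IsSemiprimitiveRing (R : Type*) [Ring R] : Prop :=
  (⊥ : TwoSidedIdeal R).jacobson = ⊥

/-- A monomial ordering on the words: a multiplication-compatible well-ordering. -/
structure MonOrder (n : ℕ) where
  /-- the strict order relation -/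
  lt : Word n → Word n → Prop
  trichotomous : ∀ u v : Word n, lt u v ∨ u = v ∨ lt v u
  trans : ∀ {u v w : Word n}, lt u v → lt v w → lt u w
  wf : WellFounded lt
  mul_compat : ∀ u v w s : Word n, lt u v → lt (w * u * s) (w * v * s)
  one_lt : ∀ u w s : Word n, w * u * s ≠ u → lt u (w * u * s)

/-- The leading monomial (word) of a nonzero element of `K⟨X⟩` with respect to a monomial
ordering: the `≺`-largest word in its support (and `1` by convention for `0`). -/
noncomputable def LM {K : Type} [Field K] {n : ℕ} (o : MonOrder n) (f : FreeAlg K n) :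
    Word n :=
  if h : ∃ w ∈ f.coeff.support, ∀ v ∈ f.coeff.support, v ≠ w → o.lt v w then h.choose else 1

/-- The weight degree of a word, where the letter `i` has weight `wt i`. -/
def wdeg {n : ℕ} (wt : Fin n → ℕ) (u : Word n) : ℕ :=
  (FreeMonoid.toList u |>.map wt).sum

/-- `f` is homogeneous of degree `p` with respect to the weight grading. -/
def IsHomogeneous {K : Type} [Field K] {n : ℕ} (wt : Fin n → ℕ) (f : FreeAlg K n)
    (p : ℕ) : Prop :=
  ∀ w ∈ f.coeff.support, wdeg wt w = p

/-- The (highest-degree) leading homogeneous component of `f` with respect to the weight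
grading. -/
noncomputable def LH {K : Type} [Field K] {n : ℕ} (wt : Fin n → ℕ) (f : FreeAlg K n) :
    FreeAlg K n :=
  MonoidAlgebra.ofCoeff (Finsupp.filter (fun w => wdeg wt w = f.coeff.support.sup (wdeg wt)) f.coeff)

/-- `𝒢` is a Gröbner basis of the two-sided ideal `I` w.r.t. the monomial ordering `o`:
`𝒢 ⊆ I ∖ {0}` and the leading monomials of `I` and of `𝒢` generate the same monomial
ideal. -/
def IsGrobnerBasis {K : Type} [Field K] {n : ℕ} (o : MonOrder n)
    (𝒢 : Set (FreeAlg K n)) (I : TwoSidedIdeal (FreeAlg K n)) : Prop :=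
  𝒢 ⊆ {f | f ∈ I ∧ f ≠ 0} ∧
    monIdeal K (LM o '' {f : FreeAlg K n | f ∈ I ∧ f ≠ 0}) = monIdeal K (LM o '' 𝒢)


/-- The embedding of words in `X_1,…,X_n` into words in `X_1,…,X_n,T`. -/
def embW {n : ℕ} : Word n →* Word (n + 1) := FreeMonoid.map Fin.castSucc

/-- The homogenization variable `T`, as a word. -/
def TW (n : ℕ) : Word (n + 1) := FreeMonoid.of (Fin.last n)

/-- The extended weight function on `X ∪ {T}`, with `d(T) = 1`. -/
def wtT {n : ℕ} (wt : Fin n → ℕ) : Fin (n + 1) → ℕ :=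
  Fin.lastCases 1 wt

/-- The non-central homogenization `f̃ ∈ K⟨X,T⟩` of `f ∈ K⟨X⟩` with respect to `T`:
each word `w` of `f` is multiplied by `T^(p - d(w))`, where `p` is the degree of `f`. -/
noncomputable def homz {K : Type} [Field K] {n : ℕ} (wt : Fin n → ℕ) (f : FreeAlg K n) :
    FreeAlg K (n + 1) :=
  f.coeff.sum fun w c =>
    MonoidAlgebra.single ((TW n) ^ (f.coeff.support.sup (wdeg wt) - wdeg wt w) * embW w) c

/-- The commutators `X_i T - T X_i`. -/
noncomputable def comms (K : Type) [Field K] (n : ℕ) : Set (FreeAlg K (n + 1)) :=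
  {c | ∃ i : Fin n,
    c = mono (FreeMonoid.of i.castSucc * TW n) - mono (TW n * FreeMonoid.of i.castSucc)}

/-- The homogenization `Ĩ = {f̃ : f ∈ I} ∪ {X_iT − TX_i}` of an ideal `I ⊆ K⟨X⟩`. -/
noncomputable def homzSet {K : Type} [Field K] {n : ℕ} (wt : Fin n → ℕ)
    (I : TwoSidedIdeal (FreeAlg K n)) : Set (FreeAlg K (n + 1)) :=
  (homz wt '' (I : Set (FreeAlg K n))) ∪ comms K n

/-! ### Auxiliary development -/

section Aux

open FreeMonoid

-- Order basics
lemma MonOrder.asymm {n : ℕ} (o : MonOrder n) {u v : Word n} (h : o.lt u v) :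
    ¬ o.lt v u := o.wf.asymmetric u v h

lemma MonOrder.irrefl {n : ℕ} (o : MonOrder n) {u : Word n} (h : o.lt u u) : False :=
  o.asymm h h

lemma MonOrder.exists_max {n : ℕ} (o : MonOrder n) (s : Finset (Word n)) (hs : s.Nonempty) :
    ∃ w ∈ s, ∀ v ∈ s, v ≠ w → o.lt v w := by
  induction hs using Finset.Nonempty.cons_induction with
  | singleton a => exact ⟨a, Finset.mem_singleton_self a, fun v hv hne =>
      absurd (Finset.mem_singleton.mp hv) hne⟩
  | cons a s ha hs ih =>
    obtain ⟨m, hm, hmax⟩ := ih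
    rcases o.trichotomous a m with hlt | rfl | hlt
    · refine ⟨m, Finset.mem_cons_of_mem hm, fun v hv hne => ?_⟩
      rcases Finset.mem_cons.mp hv with rfl | hv
      · exact hlt
      · exact hmax v hv hne
    · refine ⟨a, Finset.mem_cons_of_mem hm, fun v hv hne => ?_⟩
      rcases Finset.mem_cons.mp hv with rfl | hv
      · exact absurd rfl hne
      · exact hmax v hv hne
    · refine ⟨a, Finset.mem_cons_self a s, fun v hv hne => ?_⟩
      rcases Finset.mem_cons.mp hv with rfl | hv
      · exact absurd rfl hne
      · rcases eq_or_ne v m with rfl | hvm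
        · exact hlt
        · exact o.trans (hmax v hv hvm) hlt

lemma LM_spec {K : Type} [Field K] {n : ℕ} (o : MonOrder n) {f : FreeAlg K n} (hf : f ≠ 0) :
    LM o f ∈ f.coeff.support ∧ ∀ v ∈ f.coeff.support, v ≠ LM o f → o.lt v (LM o f) := by
  have h : ∃ w ∈ f.coeff.support, ∀ v ∈ f.coeff.support, v ≠ w → o.lt v w :=
    o.exists_max _ (Finsupp.support_nonempty_iff.mpr (MonoidAlgebra.coeff_eq_zero.not.mpr hf))
  rw [LM, dif_pos h]
  exact ⟨h.choose_spec.1, h.choose_spec.2⟩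

lemma LM_eq {K : Type} [Field K] {n : ℕ} (o : MonOrder n) {f : FreeAlg K n} {w : Word n}
    (hw : w ∈ f.coeff.support) (hmax : ∀ v ∈ f.coeff.support, v ≠ w → o.lt v w) : LM o f = w := by
  have hf : f ≠ 0 := by
    intro h; rw [h] at hw; simp at hw
  obtain ⟨h1, h2⟩ := LM_spec o hf
  by_contra hne
  exact o.asymm (h2 w hw fun h => hne h.symm) (hmax _ h1 hne)

-- wdeg basics
lemma wdeg_mul {n : ℕ} (wt : Fin n → ℕ) (u v : Word n) :
    wdeg wt (u * v) = wdeg wt u + wdeg wt v := by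
  simp [wdeg, FreeMonoid.toList_mul]

lemma wdeg_one {n : ℕ} (wt : Fin n → ℕ) : wdeg wt 1 = 0 := rfl

lemma wdeg_of {n : ℕ} (wt : Fin n → ℕ) (a : Fin n) : wdeg wt (FreeMonoid.of a) = wt a := by
  simp [wdeg]

lemma wdeg_pow {n : ℕ} (wt : Fin n → ℕ) (u : Word n) (k : ℕ) :
    wdeg wt (u ^ k) = k * wdeg wt u := by
  induction k with
  | zero => simp [wdeg_one]
  | succ k ih => rw [pow_succ, wdeg_mul, ih]; ring

lemma wdeg_embW {n : ℕ} (wt : Fin n → ℕ) (x : Word n) :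
    wdeg (wtT wt) (embW x) = wdeg wt x := by
  simp only [wdeg, embW, FreeMonoid.toList_map, List.map_map]
  congr 1
  apply List.map_congr_left
  intro a _
  simp [wtT, Function.comp]

/-- number of occurrences of `T` in a word -/
def cntT {n : ℕ} (W : Word (n + 1)) : ℕ := wdeg (wtT fun _ => 0) W

lemma cntT_mul {n : ℕ} (u v : Word (n + 1)) : cntT (u * v) = cntT u + cntT v :=
  wdeg_mul _ u v

lemma cntT_TW {n : ℕ} : cntT (TW n) = 1 := by
  simp [cntT, TW, wdeg_of, wtT]

lemma cntT_embW {n : ℕ} (x : Word n) : cntT (embW x) = 0 := by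
  have := wdeg_embW (n := n) (fun _ => 0) x
  rw [cntT, this]
  simp only [wdeg]
  exact List.sum_eq_zero (by simp)

lemma cntT_pow_embW {n : ℕ} (s : ℕ) (x : Word n) : cntT (TW n ^ s * embW x) = s := by
  rw [cntT_mul, cntT_embW, show cntT (TW n ^ s) = s from by
    rw [cntT, wdeg_pow, ← cntT, cntT_TW, mul_one]]
  simp

lemma delT_embW_aux {n : ℕ} : True := trivial

/-- delete the `T`s from a word -/
def delT {n : ℕ} : Word (n + 1) →* Word n :=
  FreeMonoid.lift (Fin.lastCases 1 FreeMonoid.of)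

lemma delT_TW {n : ℕ} : delT (TW n) = 1 := by
  simp [delT, TW]

lemma delT_castSucc {n : ℕ} (i : Fin n) :
    delT (FreeMonoid.of i.castSucc) = FreeMonoid.of i := by
  simp [delT]

lemma delT_embW {n : ℕ} (x : Word n) : delT (embW x) = x := by
  have : (delT.comp embW : Word n →* Word n) = MonoidHom.id _ := by
    apply FreeMonoid.hom_eq
    intro i
    simp [embW, delT]
  exact DFunLike.congr_fun this x

lemma delT_pow_embW {n : ℕ} (s : ℕ) (x : Word n) : delT (TW n ^ s * embW x) = x := by
  rw [map_mul, map_pow, delT_TW, one_pow, one_mul, delT_embW]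

lemma wdeg_wtT_eq {n : ℕ} (wt : Fin n → ℕ) (W : Word (n + 1)) :
    wdeg (wtT wt) W = cntT W + wdeg wt (delT W) := by
  rw [← FreeMonoid.ofList_toList W]
  induction FreeMonoid.toList W with
  | nil =>
    simp [FreeMonoid.ofList_nil, wdeg_one, cntT, map_one]
  | cons a l ih =>
    rw [FreeMonoid.ofList_cons, wdeg_mul, cntT_mul, map_mul, wdeg_mul, ih]
    have : wdeg (wtT wt) (FreeMonoid.of a) =
        cntT (FreeMonoid.of a) + wdeg wt (delT (FreeMonoid.of a)) := by
      induction a using Fin.lastCases with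
      | last => rw [wdeg_of, ← TW, cntT_TW, delT_TW, wdeg_one]; simp [wtT]
      | cast i =>
        have hc : cntT (FreeMonoid.of i.castSucc) = 0 := by
          rw [cntT, wdeg_of]; simp [wtT]
        rw [wdeg_of, delT_castSucc, wdeg_of, hc]; simp [wtT]
    rw [this]; ring

end Aux
section Aux2

open FreeMonoid

/-- Normal-form words: all `T`s at the front. -/
def NFw {n : ℕ} (W : Word (n + 1)) : Prop := ∃ (s : ℕ) (x : Word n), W = TW n ^ s * embW x

/-- the local relation forbidding a non-`T` immediately before a `T` -/
def Rnf {n : ℕ} (a b : Fin (n + 1)) : Prop := b = Fin.last n → a = Fin.last n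

lemma toList_TW_pow {n : ℕ} (s : ℕ) :
    FreeMonoid.toList (TW n ^ s) = List.replicate s (Fin.last n) := by
  induction s with
  | zero => rfl
  | succ s ih => rw [pow_succ, FreeMonoid.toList_mul, ih, TW, FreeMonoid.toList_of,
      ← List.replicate_succ' ]

lemma chain'_of_no_last {n : ℕ} (l : List (Fin (n + 1))) (h : ∀ b ∈ l, b ≠ Fin.last n) :
    l.IsChain Rnf := by
  induction l with
  | nil => exact List.isChain_nil
  | cons a l ih =>
    rw [List.isChain_cons]
    refine ⟨fun y hy hyl => ?_, ih fun b hb => h b (List.mem_cons_of_mem a hb)⟩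
    exact absurd hyl (h y (List.mem_cons_of_mem a (List.mem_of_mem_head? hy)))

lemma NF_chain {n : ℕ} (W : Word (n + 1)) :
    NFw W ↔ List.IsChain Rnf (FreeMonoid.toList W) := by
  constructor
  · rintro ⟨s, x, rfl⟩
    rw [FreeMonoid.toList_mul, toList_TW_pow]
    rw [List.isChain_append]
    refine ⟨List.isChain_replicate_of_rel s fun _ => rfl, ?_, ?_⟩
    · apply chain'_of_no_last
      intro b hb
      rw [embW, FreeMonoid.toList_map] at hb
      obtain ⟨j, _, rfl⟩ := List.mem_map.mp hb
      exact (Fin.castSucc_lt_last j).ne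
    · intro a ha y _
      intro _
      exact (List.eq_of_mem_replicate (List.mem_of_mem_getLast? ha))
  · intro h
    have main : ∀ l : List (Fin (n + 1)), l.IsChain Rnf →
        ∃ (s : ℕ) (x : Word n), FreeMonoid.ofList l = TW n ^ s * embW x := by
      intro l
      induction l with
      | nil => exact fun _ => ⟨0, 1, by simp [FreeMonoid.ofList_nil]⟩
      | cons a l ih =>
        intro hc
        rw [List.isChain_cons] at hc
        obtain ⟨s, x, hx⟩ := ih hc.2
        induction a using Fin.lastCases with
        | last =>
          exact ⟨s + 1, x, by
            rw [FreeMonoid.ofList_cons, hx, pow_succ']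
            simp [TW, mul_assoc]⟩
        | cast i =>
          rcases Nat.eq_zero_or_pos s with rfl | hs
          · refine ⟨0, FreeMonoid.of i * x, ?_⟩
            rw [FreeMonoid.ofList_cons, hx, map_mul]
            simp [embW]
          · exfalso
            obtain ⟨s', rfl⟩ := Nat.exists_eq_succ_of_ne_zero hs.ne'
            have hl : l = FreeMonoid.toList (TW n ^ (s' + 1) * embW x) := by
              rw [← hx]; rfl
            have hhead : l.head? = some (Fin.last n) := by
              rw [hl, FreeMonoid.toList_mul, toList_TW_pow, List.replicate_succ]
              rfl
            have := hc.1 (Fin.last n) (by rw [hhead]; rfl) rfl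
            exact absurd this (Fin.castSucc_lt_last i).ne
    obtain ⟨s, x, hx⟩ := main _ h
    exact ⟨s, x, by rwa [FreeMonoid.ofList_toList] at hx⟩

lemma NF_decomp {n : ℕ} {W : Word (n + 1)} (h : NFw W) :
    W = TW n ^ cntT W * embW (delT W) := by
  obtain ⟨s, x, rfl⟩ := h
  rw [cntT_pow_embW, delT_pow_embW]

lemma NF_infix {n : ℕ} {w α W β : Word (n + 1)} (h : NFw w) (hd : w = α * W * β) : NFw W := by
  rw [NF_chain] at h ⊢
  refine h.infix ⟨FreeMonoid.toList α, FreeMonoid.toList β, ?_⟩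
  rw [hd]
  simp [FreeMonoid.toList_mul]

lemma not_chain'_decomp {α : Type*} {R : α → α → Prop} :
    ∀ l : List α, ¬ l.IsChain R → ∃ (l₁ : List α) (a b : α) (l₂ : List α),
      l = l₁ ++ a :: b :: l₂ ∧ ¬ R a b := by
  intro l
  induction l with
  | nil => intro h; exact absurd List.isChain_nil h
  | cons a l ih =>
    intro h
    match l, ih with
    | [], _ => exact absurd (List.isChain_singleton a) h
    | b :: l₂, ih =>
      rw [List.isChain_cons_cons] at h
      by_cases hab : R a b
      · have : ¬ (b :: l₂).IsChain R := fun hc => h ⟨hab, hc⟩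
        obtain ⟨l₁', a', b', l₂', heq, hr⟩ := ih this
        exact ⟨a :: l₁', a', b', l₂', by rw [heq]; rfl, hr⟩
      · exact ⟨[], a, b, l₂, rfl, hab⟩

lemma not_nf_decomp {n : ℕ} (W : Word (n + 1)) (h : ¬ NFw W) :
    ∃ (i : Fin n) (α β : Word (n + 1)),
      W = α * (FreeMonoid.of i.castSucc * TW n) * β := by
  rw [NF_chain] at h
  obtain ⟨l₁, a, b, l₂, heq, hr⟩ := not_chain'_decomp _ h
  rw [Rnf] at hr
  push_neg at hr
  obtain ⟨hb, ha⟩ := hr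
  obtain ⟨i, hi⟩ := Fin.exists_castSucc_eq.mpr ha
  refine ⟨i, FreeMonoid.ofList l₁, FreeMonoid.ofList l₂, ?_⟩
  have : W = FreeMonoid.ofList (l₁ ++ a :: b :: l₂) := by
    rw [← heq, FreeMonoid.ofList_toList]
  rw [this, FreeMonoid.ofList_append, FreeMonoid.ofList_cons, FreeMonoid.ofList_cons,
    ← hi, hb]
  simp [TW, mul_assoc]

end Aux2
section Aux3

lemma mono_mul {K : Type} [Field K] {n : ℕ} (u v : Word n) :
    mono (K := K) u * mono v = mono (u * v) := by
  simp [mono, MonoidAlgebra.single_mul_single]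

lemma mono_apply_self {K : Type} [Field K] {n : ℕ} (u : Word n) :
    (mono (K := K) u).coeff u = 1 := Finsupp.single_eq_same

lemma mono_ne_zero {K : Type} [Field K] {n : ℕ} (u : Word n) : mono (K := K) u ≠ 0 := by
  intro h
  have := mono_apply_self (K := K) u
  rw [h] at this
  simp at this

lemma WDvd.refl {n : ℕ} (v : Word n) : WDvd v v := ⟨1, 1, by rw [one_mul, mul_one]⟩

lemma mem_monIdeal_iff {K : Type} [Field K] {n : ℕ} {Ω : Set (Word n)} {u : Word n} :
    mono (K := K) u ∈ monIdeal K Ω ↔ ∃ v ∈ Ω, WDvd v u := by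
  constructor
  · intro hmem
    classical
    let S : TwoSidedIdeal (FreeAlg K n) := TwoSidedIdeal.mk'
      {f : FreeAlg K n | ∀ x ∈ f.coeff.support, ∃ v ∈ Ω, WDvd v x}
      (by intro x hx; simp at hx)
      (by
        intro f g hf hg x hx
        rw [MonoidAlgebra.coeff_add] at hx
        rcases Finset.mem_union.mp (Finsupp.support_add hx) with h | h
        exacts [hf x h, hg x h])
      (by
        intro f hf x hx
        rw [MonoidAlgebra.coeff_neg, Finsupp.support_neg] at hx
        exact hf x hx)
      (by
        intro a f hf x hx
        obtain ⟨y, hy, z, hz, rfl⟩ := Finset.mem_mul.mp (MonoidAlgebra.support_coeff_mul_subset a f hx)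
        obtain ⟨v, hv, w, s, rfl⟩ := hf z hz
        exact ⟨v, hv, y * w, s, by rw [← mul_assoc, ← mul_assoc]⟩)
      (by
        intro f a hf x hx
        obtain ⟨y, hy, z, hz, rfl⟩ := Finset.mem_mul.mp (MonoidAlgebra.support_coeff_mul_subset f a hx)
        obtain ⟨v, hv, w, s, rfl⟩ := hf y hy
        exact ⟨v, hv, w, s * z, by simp [mul_assoc]⟩)
    have hS : mono '' Ω ⊆ (S : Set (FreeAlg K n)) := by
      rintro _ ⟨v, hv, rfl⟩
      rw [SetLike.mem_coe, TwoSidedIdeal.mem_mk']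
      intro x hx
      have := Finsupp.support_single_subset hx
      rw [Finset.mem_singleton] at this
      subst this
      exact ⟨_, hv, WDvd.refl _⟩
    have := TwoSidedIdeal.mem_span_iff.mp hmem S hS
    rw [TwoSidedIdeal.mem_mk'] at this
    refine this u ?_
    rw [Finsupp.mem_support_iff, mono_apply_self]
    exact one_ne_zero
  · rintro ⟨v, hv, w, s, rfl⟩
    have hv' : mono (K := K) v ∈ monIdeal K Ω :=
      TwoSidedIdeal.subset_span ⟨v, hv, rfl⟩
    have h1 : mono (K := K) v * mono s ∈ monIdeal K Ω :=
      (monIdeal K Ω).mul_mem_right _ _ hv'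
    have h2 : mono (K := K) w * (mono v * mono s) ∈ monIdeal K Ω :=
      (monIdeal K Ω).mul_mem_left _ _ h1
    rwa [mono_mul, mono_mul, ← mul_assoc] at h2

end Aux3
section Aux4

variable {K : Type} [Field K] {n : ℕ}

lemma cntT_castSucc (i : Fin n) : cntT (FreeMonoid.of i.castSucc) = 0 := by
  rw [cntT, wdeg_of]; simp [wtT]

lemma comm_words_ne (i : Fin n) :
    FreeMonoid.of i.castSucc * TW n ≠ TW n * FreeMonoid.of i.castSucc := by
  intro h
  have h2 := congrArg FreeMonoid.toList h
  rw [TW, FreeMonoid.toList_mul, FreeMonoid.toList_mul, FreeMonoid.toList_of,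
    FreeMonoid.toList_of] at h2
  have : i.castSucc = Fin.last n := by
    have := List.head_eq_of_cons_eq h2
    exact this
  exact absurd this (Fin.castSucc_lt_last i).ne

lemma comm_apply (i : Fin n) :
    ((mono (K := K) (FreeMonoid.of i.castSucc * TW n)
      - mono (TW n * FreeMonoid.of i.castSucc) : FreeAlg K (n + 1))).coeff
      (TW n * FreeMonoid.of i.castSucc) = -1 := by
  rw [MonoidAlgebra.coeff_sub, Finsupp.sub_apply]
  rw [mono, mono, MonoidAlgebra.coeff_single, MonoidAlgebra.coeff_single,
    Finsupp.single_eq_of_ne' (comm_words_ne i), Finsupp.single_eq_same]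
  ring

lemma comm_ne_zero (i : Fin n) :
    (mono (K := K) (FreeMonoid.of i.castSucc * TW n)
      - mono (TW n * FreeMonoid.of i.castSucc)) ≠ 0 := by
  intro h
  have := comm_apply (K := K) i
  rw [h] at this
  simp at this

lemma lt_swap (oT : MonOrder (n + 1))
    (hLMcomm : ∀ i : Fin n, LM oT (mono (K := K) (FreeMonoid.of i.castSucc * TW n)
        - mono (TW n * FreeMonoid.of i.castSucc)) = FreeMonoid.of i.castSucc * TW n)
    (i : Fin n) :
    oT.lt (TW n * FreeMonoid.of i.castSucc) (FreeMonoid.of i.castSucc * TW n) := by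
  have hspec := LM_spec oT (comm_ne_zero (K := K) i)
  rw [hLMcomm i] at hspec
  refine hspec.2 _ ?_ (Ne.symm (comm_words_ne i))
  rw [Finsupp.mem_support_iff, comm_apply]
  simp

lemma nu_lt (oT : MonOrder (n + 1))
    (hLMcomm : ∀ i : Fin n, LM oT (mono (K := K) (FreeMonoid.of i.castSucc * TW n)
        - mono (TW n * FreeMonoid.of i.castSucc)) = FreeMonoid.of i.castSucc * TW n) :
    ∀ W : Word (n + 1), ¬ NFw W → oT.lt (TW n ^ cntT W * embW (delT W)) W := by
  intro W
  refine oT.wf.induction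
    (C := fun W => ¬ NFw W → oT.lt (TW n ^ cntT W * embW (delT W)) W) W ?_
  intro W ih hW
  obtain ⟨i, α, β, hWd⟩ := not_nf_decomp W hW
  have hswap := lt_swap (K := K) oT hLMcomm i
  have hlt : oT.lt (α * (TW n * FreeMonoid.of i.castSucc) * β) W := by
    rw [hWd]; exact oT.mul_compat _ _ _ _ hswap
  have hcnt : cntT (α * (TW n * FreeMonoid.of i.castSucc) * β) = cntT W := by
    rw [hWd]; simp [cntT_mul, cntT_TW, cntT_castSucc]
  have hdel : delT (α * (TW n * FreeMonoid.of i.castSucc) * β) = delT W := by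
    rw [hWd]; simp [map_mul, delT_TW, delT_castSucc]
  by_cases hnf : NFw (α * (TW n * FreeMonoid.of i.castSucc) * β)
  · have hd := NF_decomp hnf
    rw [← hcnt, ← hdel, ← hd]
    exact hlt
  · have h1 := ih _ hlt hnf
    rw [hcnt, hdel] at h1
    exact oT.trans h1 hlt

lemma cmp_lemma (wt : Fin n → ℕ) (o : MonOrder n) (oT : MonOrder (n + 1))
    (hgr : ∀ u v : Word n, wdeg wt u < wdeg wt v → o.lt u v)
    (hext : ∀ u v : Word n, o.lt u v ↔ oT.lt (embW u) (embW v))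
    (hLMhomz : ∀ f : FreeAlg K n, f ≠ 0 → LM oT (homz wt f) = embW (LM o f))
    {x y : Word n} (hxy : o.lt x y) {a b : ℕ}
    (hab : a + wdeg wt x = b + wdeg wt y) :
    oT.lt (TW n ^ a * embW x) (TW n ^ b * embW y) := by
  have hdle : wdeg wt x ≤ wdeg wt y := by
    by_contra hlt
    push_neg at hlt
    exact o.irrefl (o.trans hxy (hgr _ _ hlt))
  rcases eq_or_lt_of_le hdle with hde | hdlt
  · have hba : a = b := by omega
    subst hba
    have h2 := oT.mul_compat _ _ (TW n ^ a) 1 ((hext x y).mp hxy)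
    simpa [mul_one] using h2
  · have hxny : x ≠ y := fun h => o.irrefl (h ▸ hxy)
    set g : FreeAlg K n := MonoidAlgebra.single x 1 + MonoidAlgebra.single y 1 with hg
    have hgy : g.coeff y = 1 := by
      rw [hg, MonoidAlgebra.coeff_add, Finsupp.add_apply, MonoidAlgebra.coeff_single,
        MonoidAlgebra.coeff_single, Finsupp.single_eq_of_ne' hxny, Finsupp.single_eq_same]
      ring
    have hgx : g.coeff x = 1 := by
      rw [hg, MonoidAlgebra.coeff_add, Finsupp.add_apply, MonoidAlgebra.coeff_single,
        MonoidAlgebra.coeff_single, Finsupp.single_eq_of_ne' (Ne.symm hxny),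
        Finsupp.single_eq_same]
      ring
    have hg0 : g ≠ 0 := by
      intro h; rw [h] at hgy; simp at hgy
    have hsupp : g.coeff.support ⊆ {x, y} := by
      rw [hg, MonoidAlgebra.coeff_add, MonoidAlgebra.coeff_single, MonoidAlgebra.coeff_single]
      refine Finsupp.support_add.trans ?_
      intro w hw
      rcases Finset.mem_union.mp hw with h | h
      · have := Finsupp.support_single_subset h
        simp only [Finset.mem_singleton] at this
        simp [this]
      · have := Finsupp.support_single_subset h
        simp only [Finset.mem_singleton] at this
        simp [this]
    have hymem : y ∈ g.coeff.support := Finsupp.mem_support_iff.mpr (by rw [hgy]; exact one_ne_zero)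
    have hLMg : LM o g = y := by
      refine LM_eq o hymem fun v hv hne => ?_
      rcases Finset.mem_insert.mp (hsupp hv) with rfl | h
      · exact hxy
      · rw [Finset.mem_singleton] at h
        exact absurd h hne
    have hsup : g.coeff.support.sup (wdeg wt) = wdeg wt y := by
      apply le_antisymm
      · refine Finset.sup_le fun w hw => ?_
        rcases Finset.mem_insert.mp (hsupp hw) with rfl | h
        · exact le_of_lt hdlt
        · rw [Finset.mem_singleton] at h; rw [h]
      · exact Finset.le_sup hymem
    have hhomz : homz wt g = MonoidAlgebra.single (TW n ^ (wdeg wt y - wdeg wt x) * embW x) 1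
        + MonoidAlgebra.single (TW n ^ (wdeg wt y - wdeg wt y) * embW y) (1 : K) := by
      have hmd : homz wt g = MonoidAlgebra.mapDomain
          (fun w => TW n ^ (g.coeff.support.sup (wdeg wt) - wdeg wt w) * embW w) g := by
        simp only [homz, MonoidAlgebra.mapDomain, Finsupp.mapDomain,
          MonoidAlgebra.ofCoeff_finsuppSum, MonoidAlgebra.ofCoeff_single]
      rw [hmd, hg, MonoidAlgebra.mapDomain_add, MonoidAlgebra.mapDomain_single,
        MonoidAlgebra.mapDomain_single,
        hsup]
    have hex_ne : TW n ^ (wdeg wt y - wdeg wt x) * embW x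
        ≠ TW n ^ (wdeg wt y - wdeg wt y) * embW y := by
      intro h
      have h2 := congrArg cntT h
      rw [cntT_pow_embW, cntT_pow_embW] at h2
      omega
    have hhz0 : homz wt g ≠ 0 := by
      intro h
      have h2 : (homz wt g).coeff (TW n ^ (wdeg wt y - wdeg wt y) * embW y) = 1 := by
        rw [hhomz, MonoidAlgebra.coeff_add, Finsupp.add_apply, MonoidAlgebra.coeff_single,
          MonoidAlgebra.coeff_single, Finsupp.single_eq_of_ne' hex_ne, Finsupp.single_eq_same]
        ring
      rw [h] at h2
      simp at h2
    have hLMh := hLMhomz g hg0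
    rw [hLMg] at hLMh
    have hspec := LM_spec oT hhz0
    rw [hLMh] at hspec
    have hmem : TW n ^ (wdeg wt y - wdeg wt x) * embW x ∈ (homz wt g).coeff.support := by
      rw [Finsupp.mem_support_iff, hhomz, MonoidAlgebra.coeff_add, Finsupp.add_apply,
        MonoidAlgebra.coeff_single, MonoidAlgebra.coeff_single, Finsupp.single_eq_same,
        Finsupp.single_eq_of_ne' (Ne.symm hex_ne)]
      simp
    have hne2 : TW n ^ (wdeg wt y - wdeg wt x) * embW x ≠ embW y := by
      intro h
      have h2 := congrArg cntT h
      rw [cntT_pow_embW, cntT_embW] at h2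
      omega
    have hkey : oT.lt (TW n ^ (wdeg wt y - wdeg wt x) * embW x) (embW y) :=
      hspec.2 _ hmem hne2
    have hpow : TW n ^ a = TW n ^ b * TW n ^ (wdeg wt y - wdeg wt x) := by
      rw [← pow_add]
      congr 1
      omega
    have h3 := oT.mul_compat _ _ (TW n ^ b) 1 hkey
    rw [mul_one, mul_one] at h3
    rw [hpow, mul_assoc]
    exact h3

end Aux4
section Aux5

variable {K : Type} [Field K] {n : ℕ}

/-- images of the generators under the `T ↦ t` map -/
noncomputable def phiHom (K : Type) [Field K] {n : ℕ} (wt : Fin n → ℕ) :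
    Word (n + 1) →* Polynomial (FreeAlg K n) :=
  FreeMonoid.lift (Fin.lastCases Polynomial.X
    (fun j => Polynomial.C (mono (FreeMonoid.of j)) * Polynomial.X ^ (wt j)))

/-- the algebra map `K⟨X,T⟩ → K⟨X⟩[t]` -/
noncomputable def Phi (K : Type) [Field K] {n : ℕ} (wt : Fin n → ℕ) :
    FreeAlg K (n + 1) →ₐ[K] Polynomial (FreeAlg K n) :=
  MonoidAlgebra.lift K (Polynomial (FreeAlg K n)) (Word (n + 1)) (phiHom K wt)

lemma C_mul_X_pow_mul (m m' : FreeAlg K n) (s d : ℕ) :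
    (Polynomial.C m * Polynomial.X ^ s) * (Polynomial.C m' * Polynomial.X ^ d)
      = Polynomial.C (m * m') * Polynomial.X ^ (s + d) := by
  rw [mul_assoc, ← mul_assoc (Polynomial.X ^ s), Polynomial.X_pow_mul, mul_assoc, ← pow_add,
    ← mul_assoc, ← map_mul]

lemma phiHom_of (wt : Fin n → ℕ) (a : Fin (n + 1)) :
    phiHom K wt (FreeMonoid.of a)
      = Polynomial.C (mono (delT (FreeMonoid.of a)))
          * Polynomial.X ^ (wdeg (wtT wt) (FreeMonoid.of a)) := by
  induction a using Fin.lastCases with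
  | last =>
    have h1 : delT (FreeMonoid.of (Fin.last n)) = 1 := delT_TW
    have h2 : wdeg (wtT wt) (FreeMonoid.of (Fin.last n)) = 1 := by
      rw [wdeg_of]; simp [wtT]
    rw [h1, h2]
    have h3 : mono (K := K) (n := n) 1 = 1 := rfl
    rw [h3, map_one, one_mul, pow_one]
    simp [phiHom]
  | cast i =>
    have h1 : delT (FreeMonoid.of i.castSucc) = FreeMonoid.of i := delT_castSucc i
    have h2 : wdeg (wtT wt) (FreeMonoid.of i.castSucc) = wt i := by
      rw [wdeg_of]; simp [wtT]
    rw [h1, h2]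
    simp [phiHom]

lemma phiHom_apply (wt : Fin n → ℕ) (W : Word (n + 1)) :
    phiHom K wt W = Polynomial.C (mono (delT W)) * Polynomial.X ^ (wdeg (wtT wt) W) := by
  rw [← FreeMonoid.ofList_toList W]
  induction FreeMonoid.toList W with
  | nil =>
    rw [FreeMonoid.ofList_nil, map_one, map_one, wdeg_one, pow_zero]
    have : mono (K := K) (n := n) 1 = 1 := rfl
    rw [this, map_one, one_mul]
  | cons a l ih =>
    rw [FreeMonoid.ofList_cons, map_mul, ih, phiHom_of, C_mul_X_pow_mul, mono_mul,
      ← map_mul delT, ← wdeg_mul]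

lemma coeff_Phi (wt : Fin n → ℕ) (F : FreeAlg K (n + 1)) (q : ℕ) :
    (Phi K wt F).coeff q
      = MonoidAlgebra.mapDomain delT
          (MonoidAlgebra.ofCoeff (Finsupp.filter (fun W => wdeg (wtT wt) W = q) F.coeff)) := by
  classical
  have hPhi : Phi K wt F = F.coeff.sum fun W c => c • phiHom K wt W :=
    MonoidAlgebra.lift_apply _ _
  rw [hPhi, Finsupp.sum, Polynomial.finset_sum_coeff]
  have hterm : ∀ W ∈ F.coeff.support, (F.coeff W • phiHom K wt W).coeff q
      = if wdeg (wtT wt) W = q then MonoidAlgebra.single (delT W) (F.coeff W) else 0 := by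
    intro W _
    rw [Polynomial.coeff_smul, phiHom_apply, Polynomial.coeff_C_mul, Polynomial.coeff_X_pow]
    by_cases h : wdeg (wtT wt) W = q
    · rw [if_pos h, if_pos h.symm, mul_one]
      simp [mono, MonoidAlgebra.smul_single']
    · rw [if_neg h, if_neg (fun hh => h hh.symm), mul_zero, smul_zero]
  rw [Finset.sum_congr rfl hterm]
  rw [MonoidAlgebra.mapDomain, MonoidAlgebra.coeff_ofCoeff, Finsupp.mapDomain,
    MonoidAlgebra.ofCoeff_finsuppSum, Finsupp.sum, Finsupp.support_filter]
  have hbody : ∀ W ∈ F.coeff.support.filter (fun W => wdeg (wtT wt) W = q),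
      MonoidAlgebra.ofCoeff
        (Finsupp.single (delT W) ((Finsupp.filter (fun W => wdeg (wtT wt) W = q) F.coeff) W))
        = MonoidAlgebra.single (delT W) (F.coeff W) := by
    intro W hW
    rw [Finsupp.filter_apply_pos, MonoidAlgebra.ofCoeff_single]
    exact (Finset.mem_filter.mp hW).2
  rw [Finset.sum_congr rfl hbody, Finset.sum_filter]

end Aux5
section Aux6

variable {K : Type} [Field K] {n : ℕ}

lemma homz_eq_mapDomain (wt : Fin n → ℕ) (f : FreeAlg K n) :
    homz wt f = MonoidAlgebra.mapDomain
      (fun w => TW n ^ (f.coeff.support.sup (wdeg wt) - wdeg wt w) * embW w) f := by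
  simp only [homz, MonoidAlgebra.mapDomain, Finsupp.mapDomain,
    MonoidAlgebra.ofCoeff_finsuppSum, MonoidAlgebra.ofCoeff_single]

lemma delT_homz (wt : Fin n → ℕ) (f : FreeAlg K n) :
    MonoidAlgebra.mapDomain delT (homz wt f) = f := by
  rw [homz_eq_mapDomain, MonoidAlgebra.mapDomain, MonoidAlgebra.mapDomain,
    MonoidAlgebra.coeff_ofCoeff, ← Finsupp.mapDomain_comp]
  have h : (delT ∘ fun w => TW n ^ (f.coeff.support.sup (wdeg wt) - wdeg wt w) * embW w)
      = id := by
    funext w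
    simp [Function.comp, delT_pow_embW]
  rw [h, Finsupp.mapDomain_id]

lemma homz_ne_zero (wt : Fin n → ℕ) {f : FreeAlg K n} (hf : f ≠ 0) : homz wt f ≠ 0 := by
  intro h
  apply hf
  rw [← delT_homz wt f, h, MonoidAlgebra.mapDomain_zero]

lemma homz_homog (wt : Fin n → ℕ) (f : FreeAlg K n) :
    ∀ W ∈ (homz wt f).coeff.support, wdeg (wtT wt) W = f.coeff.support.sup (wdeg wt) := by
  classical
  intro W hW
  rw [homz_eq_mapDomain, MonoidAlgebra.mapDomain, MonoidAlgebra.coeff_ofCoeff] at hW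
  obtain ⟨w, hw, rfl⟩ := Finset.mem_image.mp (Finsupp.mapDomain_support hW)
  have hTW : wdeg (wtT wt) (TW n) = 1 := by rw [TW, wdeg_of]; simp [wtT]
  rw [wdeg_mul, wdeg_pow, wdeg_embW, hTW, mul_one]
  have : wdeg wt w ≤ f.coeff.support.sup (wdeg wt) := Finset.le_sup (f := wdeg wt) hw
  omega

lemma span_coeff_mem (wt : Fin n → ℕ) (I : TwoSidedIdeal (FreeAlg K n)) {F : FreeAlg K (n + 1)}
    (hF : F ∈ TwoSidedIdeal.span (homzSet wt I)) (q : ℕ) : (Phi K wt F).coeff q ∈ I := by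
  classical
  let S : TwoSidedIdeal (FreeAlg K (n + 1)) := TwoSidedIdeal.mk'
    {F : FreeAlg K (n + 1) | ∀ k, (Phi K wt F).coeff k ∈ I}
    (by intro k; rw [map_zero, Polynomial.coeff_zero]; exact TwoSidedIdeal.zero_mem I)
    (by
      intro a b ha hb k
      rw [map_add, Polynomial.coeff_add]
      exact TwoSidedIdeal.add_mem I (ha k) (hb k))
    (by
      intro a ha k
      rw [map_neg, Polynomial.coeff_neg]
      exact TwoSidedIdeal.neg_mem I (ha k))
    (by
      intro a b hb k
      rw [map_mul, Polynomial.coeff_mul]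
      exact TwoSidedIdeal.finsetSum_mem _ _ _ fun x _ =>
        TwoSidedIdeal.mul_mem_left I _ _ (hb x.2))
    (by
      intro a b ha k
      rw [map_mul, Polynomial.coeff_mul]
      exact TwoSidedIdeal.finsetSum_mem _ _ _ fun x _ =>
        TwoSidedIdeal.mul_mem_right I _ _ (ha x.1))
  have hsub : homzSet wt I ⊆ (S : Set (FreeAlg K (n + 1))) := by
    rintro c (⟨g, hg, rfl⟩ | ⟨i, rfl⟩)
    · rw [SetLike.mem_coe, TwoSidedIdeal.mem_mk']
      intro k
      rw [coeff_Phi]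
      by_cases hk : k = g.coeff.support.sup (wdeg wt)
      · subst hk
        have hfil : MonoidAlgebra.ofCoeff (Finsupp.filter
            (fun W => wdeg (wtT wt) W = g.coeff.support.sup (wdeg wt))
            (homz wt g).coeff) = homz wt g := by
          rw [(Finsupp.filter_eq_self_iff _ _).mpr, MonoidAlgebra.ofCoeff_coeff]
          intro W hW
          exact homz_homog wt g W (Finsupp.mem_support_iff.mpr hW)
        rw [hfil, delT_homz]
        exact hg
      · have hfil : MonoidAlgebra.ofCoeff
            (Finsupp.filter (fun W => wdeg (wtT wt) W = k) (homz wt g).coeff) = 0 := by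
          rw [(Finsupp.filter_eq_zero_iff _ _).mpr, MonoidAlgebra.ofCoeff_zero]
          intro W hWk
          by_contra hne
          have h1 := homz_homog wt g W (Finsupp.mem_support_iff.mpr hne)
          rw [hWk] at h1
          exact hk h1
        rw [hfil, MonoidAlgebra.mapDomain_zero]
        exact TwoSidedIdeal.zero_mem I
    · rw [SetLike.mem_coe, TwoSidedIdeal.mem_mk']
      intro k
      have hPhic : Phi K wt (mono (FreeMonoid.of i.castSucc * TW n)
          - mono (TW n * FreeMonoid.of i.castSucc)) = 0 := by
        have h1 : ∀ W : Word (n + 1), Phi K wt (mono W) = phiHom K wt W := by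
          intro W
          rw [mono]
          have := MonoidAlgebra.lift_single (R := K) (M := Word (n + 1)) (phiHom K wt) W (1 : K)
          rw [Phi, this, one_smul]
        rw [map_sub, h1, h1, phiHom_apply, phiHom_apply]
        have hd1 : delT (FreeMonoid.of i.castSucc * TW n) = FreeMonoid.of i := by
          rw [map_mul, delT_castSucc, delT_TW, mul_one]
        have hd2 : delT (TW n * FreeMonoid.of i.castSucc) = FreeMonoid.of i := by
          rw [map_mul, delT_castSucc, delT_TW, one_mul]
        have hw1 : wdeg (wtT wt) (FreeMonoid.of i.castSucc * TW n) = wt i + 1 := by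
          rw [wdeg_mul, wdeg_of, TW, wdeg_of]; simp [wtT]
        have hw2 : wdeg (wtT wt) (TW n * FreeMonoid.of i.castSucc) = wt i + 1 := by
          rw [wdeg_mul, wdeg_of, TW, wdeg_of]; simp [wtT]; omega
        rw [hd1, hd2, hw1, hw2, sub_self]
      rw [hPhic, Polynomial.coeff_zero]
      exact TwoSidedIdeal.zero_mem I
  have hmem := TwoSidedIdeal.mem_span_iff.mp hF S hsub
  rw [TwoSidedIdeal.mem_mk'] at hmem
  exact hmem q

end Aux6
section Aux7

variable {K : Type} [Field K] {n : ℕ}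

lemma key_lemma (wt : Fin n → ℕ) (o : MonOrder n) (oT : MonOrder (n + 1))
    (hgr : ∀ u v : Word n, wdeg wt u < wdeg wt v → o.lt u v)
    (hext : ∀ u v : Word n, o.lt u v ↔ oT.lt (embW u) (embW v))
    (hLMhomz : ∀ f : FreeAlg K n, f ≠ 0 → LM oT (homz wt f) = embW (LM o f))
    (hLMcomm : ∀ i : Fin n, LM oT (mono (K := K) (FreeMonoid.of i.castSucc * TW n)
        - mono (TW n * FreeMonoid.of i.castSucc)) = FreeMonoid.of i.castSucc * TW n)
    {F : FreeAlg K (n + 1)} (hF : F ≠ 0) {q : ℕ}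
    (hhom : ∀ W ∈ F.coeff.support, wdeg (wtT wt) W = q)
    (hNF : NFw (LM oT F)) :
    MonoidAlgebra.mapDomain delT F ≠ 0 ∧
      LM o (MonoidAlgebra.mapDomain delT F) = delT (LM oT F) := by
  classical
  obtain ⟨hW₀mem, hW₀max⟩ := LM_spec oT hF
  set W₀ := LM oT F with hW₀
  set v₀ := delT W₀ with hv₀
  have hdegW₀ : wdeg (wtT wt) W₀ = q := hhom _ hW₀mem
  have hcntW₀ : cntT W₀ + wdeg wt v₀ = q := by
    have h2 := wdeg_wtT_eq wt W₀
    rw [← hv₀] at h2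
    omega
  have hW₀form : W₀ = TW n ^ (q - wdeg wt v₀) * embW v₀ := by
    have h3 := NF_decomp hNF
    rw [← hv₀] at h3
    rw [show q - wdeg wt v₀ = cntT W₀ from by omega]
    exact h3
  have hfiber : ∀ W ∈ F.coeff.support, delT W = v₀ → W = W₀ := by
    intro W hWmem hWdel
    by_contra hne
    have hdW : wdeg (wtT wt) W = q := hhom _ hWmem
    have hcW : cntT W = q - wdeg wt v₀ := by
      have h4 := wdeg_wtT_eq wt W
      rw [hWdel] at h4
      omega
    by_cases hnf : NFw W
    · apply hne
      have h5 := NF_decomp hnf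
      rw [hWdel, hcW, ← hW₀form] at h5
      exact h5
    · have hb := nu_lt (K := K) oT hLMcomm W hnf
      rw [hWdel, hcW, ← hW₀form] at hb
      exact oT.asymm (hW₀max W hWmem hne) hb
  set f := MonoidAlgebra.mapDomain delT F with hf
  have happly : ∀ x : Word n, f.coeff x
      = ∑ W ∈ F.coeff.support, if delT W = x then F.coeff W else 0 := by
    intro x
    rw [hf, MonoidAlgebra.mapDomain, MonoidAlgebra.coeff_ofCoeff, Finsupp.mapDomain, Finsupp.sum_apply, Finsupp.sum]
    refine Finset.sum_congr rfl fun W _ => ?_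
    rw [Finsupp.single_apply]
  have hfv₀ : f.coeff v₀ = F.coeff W₀ := by
    rw [happly, Finset.sum_eq_single W₀]
    · rw [if_pos hv₀.symm]
    · intro W hWmem hne
      rw [if_neg]
      intro hdel
      exact hne (hfiber W hWmem hdel)
    · intro habs
      exact absurd hW₀mem habs
  have hFW₀ : F.coeff W₀ ≠ 0 := Finsupp.mem_support_iff.mp hW₀mem
  have hf0 : f ≠ 0 := fun h => hFW₀ (by rw [← hfv₀, h]; rfl)
  refine ⟨hf0, ?_⟩
  refine LM_eq o (Finsupp.mem_support_iff.mpr (by rw [hfv₀]; exact hFW₀)) ?_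
  intro x hx hxne
  obtain ⟨W, hWmem, hWdel⟩ : ∃ W ∈ F.coeff.support, delT W = x := by
    have h6 := Finsupp.mapDomain_support (f := delT) (s := F.coeff)
      (by rw [hf, MonoidAlgebra.mapDomain, MonoidAlgebra.coeff_ofCoeff] at hx; exact hx)
    obtain ⟨W, hW, rfl⟩ := Finset.mem_image.mp h6
    exact ⟨W, hW, rfl⟩
  have hWne : W ≠ W₀ := fun h => hxne (by rw [← hWdel, h, ← hv₀])
  have hWlt : oT.lt W W₀ := hW₀max W hWmem hWne
  have hdW : wdeg (wtT wt) W = q := hhom _ hWmem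
  have hcW : cntT W + wdeg wt x = q := by
    have h7 := wdeg_wtT_eq wt W
    rw [hWdel] at h7
    omega
  rcases o.trichotomous x v₀ with h | h | h
  · exact h
  · exact absurd h hxne
  · exfalso
    have hcmp := cmp_lemma (K := K) wt o oT hgr hext hLMhomz h
        (a := q - wdeg wt v₀) (b := cntT W) (by omega)
    rw [← hW₀form] at hcmp
    by_cases hnf : NFw W
    · have h8 := NF_decomp hnf
      rw [hWdel] at h8
      rw [show cntT W = cntT W from rfl] at h8
      rw [← h8] at hcmp
      exact oT.asymm hWlt hcmp
    · have hb := nu_lt (K := K) oT hLMcomm W hnf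
      rw [hWdel] at hb
      exact oT.asymm hWlt (oT.trans hcmp hb)

end Aux7
/-- If `𝒢` is a Gröbner basis of `I ⊆ K⟨X⟩` w.r.t. the `ℕ`-graded ordering `≺_gr`, then
the normal words modulo the homogenization ideal `⟨Ĩ⟩ ⊆ K⟨X,T⟩`, w.r.t. the extended
ordering `≺_{T-gr}`, are exactly the words `T^r u` with `u` normal modulo `I` and
`r ∈ ℕ`. -/
theorem normal_words_of_homogenized {K : Type} [Field K] {n : ℕ}
    (wt : Fin n → ℕ) (hwt : ∀ i, 0 < wt i)
    (o : MonOrder n) (hgr : ∀ u v : Word n, wdeg wt u < wdeg wt v → o.lt u v)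
    (oT : MonOrder (n + 1))
    (hgrT : ∀ u v : Word (n + 1), wdeg (wtT wt) u < wdeg (wtT wt) v → oT.lt u v)
    (hext : ∀ u v : Word n, o.lt u v ↔ oT.lt (embW u) (embW v))
    (hTsmall : ∀ i : Fin n, oT.lt (TW n) (FreeMonoid.of i.castSucc))
    (hLMhomz : ∀ f : FreeAlg K n, f ≠ 0 → LM oT (homz wt f) = embW (LM o f))
    (hLMcomm : ∀ i : Fin n,
      LM oT (mono (K := K) (FreeMonoid.of i.castSucc * TW n)
        - mono (TW n * FreeMonoid.of i.castSucc)) = FreeMonoid.of i.castSucc * TW n)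
    (I : TwoSidedIdeal (FreeAlg K n)) (𝒢 : Set (FreeAlg K n))
    (hGB : IsGrobnerBasis o 𝒢 I) :
    {w : Word (n + 1) |
        mono (K := K) w ∉ monIdeal K (LM oT ''
          {f : FreeAlg K (n + 1) | f ∈ TwoSidedIdeal.span (homzSet wt I) ∧ f ≠ 0})} =
      {w : Word (n + 1) | ∃ (r : ℕ) (u : Word n),
        mono (K := K) u ∉ monIdeal K (LM o '' {f : FreeAlg K n | f ∈ I ∧ f ≠ 0}) ∧
        w = (TW n) ^ r * embW u} := by
  classical
  ext w
  simp only [Set.mem_setOf_eq]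
  constructor
  · intro hw
    have hNF : NFw w := by
      by_contra hnf
      obtain ⟨i, α, β, hdec⟩ := not_nf_decomp w hnf
      apply hw
      refine mem_monIdeal_iff.mpr ⟨FreeMonoid.of i.castSucc * TW n, ?_, α, β, hdec⟩
      exact ⟨mono (FreeMonoid.of i.castSucc * TW n) - mono (TW n * FreeMonoid.of i.castSucc),
        ⟨TwoSidedIdeal.subset_span ((Set.mem_union _ _ _).mpr (Or.inr ⟨i, rfl⟩)),
          comm_ne_zero i⟩, hLMcomm i⟩
    refine ⟨cntT w, delT w, ?_, NF_decomp hNF⟩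
    intro hu
    obtain ⟨v, ⟨g, ⟨hgI, hg0⟩, hgLM⟩, a, b, hab⟩ := mem_monIdeal_iff.mp hu
    apply hw
    refine mem_monIdeal_iff.mpr ⟨embW v, ⟨homz wt g, ⟨?_, homz_ne_zero wt hg0⟩, ?_⟩, ?_⟩
    · exact TwoSidedIdeal.subset_span ((Set.mem_union _ _ _).mpr (Or.inl ⟨g, hgI, rfl⟩))
    · rw [hLMhomz g hg0, hgLM]
    · refine ⟨TW n ^ cntT w * embW a, embW b, ?_⟩
      conv_lhs => rw [NF_decomp hNF]
      rw [hab, map_mul, map_mul]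
      simp [mul_assoc]
  · rintro ⟨r, u, hu, rfl⟩
    intro hmem
    obtain ⟨v, ⟨F, ⟨hFJ, hF0⟩, rfl⟩, α, β, hdec⟩ := mem_monIdeal_iff.mp hmem
    have hNFw : NFw (TW n ^ r * embW u) := ⟨r, u, rfl⟩
    have hNFv : NFw (LM oT F) := NF_infix hNFw hdec
    set q := wdeg (wtT wt) (LM oT F) with hq
    set Fq := MonoidAlgebra.ofCoeff (Finsupp.filter (fun W => wdeg (wtT wt) W = q) F.coeff) with hFq
    obtain ⟨hLmem, hLmax⟩ := LM_spec oT hF0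
    have hWqmem : LM oT F ∈ Fq.coeff.support := by
      rw [hFq, MonoidAlgebra.coeff_ofCoeff, Finsupp.support_filter, Finset.mem_filter]
      exact ⟨hLmem, hq.symm⟩
    have hFq0 : Fq ≠ 0 := fun h => by rw [h] at hWqmem; simp at hWqmem
    have hsub : Fq.coeff.support ⊆ F.coeff.support := by
      rw [hFq, MonoidAlgebra.coeff_ofCoeff, Finsupp.support_filter]
      exact Finset.filter_subset _ _
    have hLMFq : LM oT Fq = LM oT F :=
      LM_eq oT hWqmem (fun V hV hne => hLmax V (hsub hV) hne)
    have hhom : ∀ W ∈ Fq.coeff.support, wdeg (wtT wt) W = q := by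
      intro W hW
      rw [hFq, MonoidAlgebra.coeff_ofCoeff, Finsupp.support_filter, Finset.mem_filter] at hW
      exact hW.2
    have hkey := key_lemma wt o oT hgr hext hLMhomz hLMcomm hFq0 hhom
      (by rw [hLMFq]; exact hNFv)
    rw [hLMFq] at hkey
    have hfI : MonoidAlgebra.mapDomain delT Fq ∈ I := by
      have h9 := span_coeff_mem wt I hFJ q
      rw [coeff_Phi] at h9
      rw [hFq]
      exact h9
    apply hu
    refine mem_monIdeal_iff.mpr ⟨LM o (MonoidAlgebra.mapDomain delT Fq),
      ⟨MonoidAlgebra.mapDomain delT Fq, ⟨hfI, hkey.1⟩, rfl⟩, ?_⟩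
    have hdel := congrArg delT hdec
    rw [delT_pow_embW] at hdel
    rw [map_mul, map_mul] at hdel
    rw [hkey.2]
    exact ⟨delT α, delT β, hdel⟩
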